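/- Let a < b, let β be continuously differentiable on [a,b] with β(x) ≥ β_0 > 0 for all x, let q and f be continuous on [a,b], and let u be three times continuously differentiable on [a,b] satisfying β(x)·u''(x) + β'(x)·u'(x) − q(x)·u(x) + f(x) = 0 for all x in [a,b]. Define v(x) = u_I(x) − (β'(x)/(2β(x)))·(x−a)(x−b)·(u(b)−u(a))/(b−a) + (q(x)/(2β(x)))·(x−a)(x−b)·u_I(x) − (f(x)/(2β(x)))·(x−a)(x−b), where u_I is the linear interpolant of u on [a,b]. Then for every x in [a,b], |u(x) − v(x)| ≤ ((b−a)^3/8)·( sup_{[a,b]}|u'''| + (sup_{[a,b]}|β'|/β_0)·sup_{[a,b]}|u''| ) + ((b−a)^4/64)·(sup_{[a,b]}|q|/β_0)·sup_{[a,b]}|u''|. -/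

import Mathlib

lemma deriv_bound_aux {p q : ℝ} (hpq : p ≤ q) (F F' B B' : ℝ → ℝ)
    (hF : ∀ t ∈ Set.Icc p q, HasDerivWithinAt F (F' t) (Set.Icc p q) t)
    (hB : ∀ t ∈ Set.Icc p q, HasDerivWithinAt B (B' t) (Set.Icc p q) t)
    (hbd : ∀ t ∈ Set.Icc p q, |F' t| ≤ B' t) :
    |F q - F p| ≤ B q - B p := by
  have hFc : ContinuousOn F (Set.Icc p q) := fun t ht => (hF t ht).continuousWithinAt
  have hBc : ContinuousOn B (Set.Icc p q) := fun t ht => (hB t ht).continuousWithinAt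
  have hF' : ∀ t ∈ Set.Ico p q, HasDerivWithinAt (fun s => F s - F p) (F' t) (Set.Ici t) t :=
    fun t ht => ((hF t (Set.Ico_subset_Icc_self ht)).sub_const (F p)).mono_of_mem_nhdsWithin
      (Icc_mem_nhdsGE_of_mem ht)
  have hB' : ∀ t ∈ Set.Ico p q, HasDerivWithinAt (fun s => B s - B p) (B' t) (Set.Ici t) t :=
    fun t ht => ((hB t (Set.Ico_subset_Icc_self ht)).sub_const (B p)).mono_of_mem_nhdsWithin
      (Icc_mem_nhdsGE_of_mem ht)
  have key := image_norm_le_of_norm_deriv_right_le_deriv_boundary'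
    (f := fun s => F s - F p) (f' := F') (B := fun s => B s - B p) (B' := B')
    (hFc.sub continuousOn_const) hF' (by simp) (hBc.sub continuousOn_const) hB'
    (fun t ht => by simpa [Real.norm_eq_abs] using hbd t (Set.Ico_subset_Icc_self ht))
    ⟨hpq, le_rfl⟩
  simpa [Real.norm_eq_abs] using key

lemma sup_abs_bound {a b : ℝ} (hab : a ≤ b) (g : ℝ → ℝ)
    (hg : ContinuousOn g (Set.Icc a b)) :
    (∀ t ∈ Set.Icc a b, |g t| ≤ ⨆ s : Set.Icc a b, |g s|) ∧
      0 ≤ ⨆ s : Set.Icc a b, |g s| := by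
  obtain ⟨C, hC⟩ := isCompact_Icc.exists_bound_of_continuousOn hg
  have hbdd : BddAbove (Set.range fun s : Set.Icc a b => |g s|) := by
    refine ⟨C, ?_⟩
    rintro y ⟨t, rfl⟩
    simpa [Real.norm_eq_abs] using hC t t.2
  have hle : ∀ t ∈ Set.Icc a b, |g t| ≤ ⨆ s : Set.Icc a b, |g s| :=
    fun t ht => le_ciSup hbdd (⟨t, ht⟩ : Set.Icc a b)
  exact ⟨hle, le_trans (abs_nonneg _) (hle a ⟨le_rfl, hab⟩)⟩

lemma bound_quad (p r c M X : ℝ) (hM : 0 ≤ M) (hp : 0 ≤ p) (hr : 0 ≤ r)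
    (hc : p + r = c) (hcpos : 0 < c)
    (hX : X ≤ r * (M * p^2 / 2) + p * (M * r^2 / 2)) : X / c ≤ M * c^2 / 8 := by
  subst hc
  rw [div_le_iff₀ hcpos]
  nlinarith [mul_nonneg (mul_nonneg hM (add_nonneg hp hr)) (sq_nonneg (p - r))]

lemma bound_cubic (p r c M X : ℝ) (hM : 0 ≤ M) (hp : 0 ≤ p) (hr : 0 ≤ r)
    (hc : p + r = c) (hcpos : 0 < c)
    (hX : X ≤ r * (M * p^3 / 6) + p * (M * r^3 / 6)) : X / c ≤ M * c^3 / 24 := by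
  subst hc
  rw [div_le_iff₀ hcpos]
  nlinarith [mul_nonneg hM (pow_nonneg hp 4), mul_nonneg hM (pow_nonneg hr 4),
    mul_nonneg hM (sq_nonneg (p * r)), mul_nonneg (mul_nonneg hM hp) hr,
    mul_nonneg hM (sq_nonneg (p - r)), mul_nonneg hM (sq_nonneg (p + r))]

lemma bound_lin (p r c M X : ℝ) (hM : 0 ≤ M) (hp : 0 ≤ p) (hr : 0 ≤ r)
    (hc : p + r = c) (hcpos : 0 < c)
    (hX : X ≤ M * r^2 / 2 + M * p^2 / 2) : X / c ≤ M * c / 2 := by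
  subst hc
  rw [div_le_iff₀ hcpos]
  nlinarith [mul_nonneg (mul_nonneg hM hp) hr]

lemma bound_quarter (s t c : ℝ) (hc : s + t = c) : s * t ≤ c^2 / 4 := by
  subst hc; nlinarith [sq_nonneg (s - t)]

lemma bound_final (h β₀ M3 M2 Mq Mb : ℝ) (hh : 0 ≤ h) (hβ₀ : 0 < β₀)
    (hM3 : 0 ≤ M3) (hM2 : 0 ≤ M2) (hMq : 0 ≤ Mq) (hMb : 0 ≤ Mb) :
    M3 * h^3 / 24 + h^2 / (8 * β₀) * (Mq * (M2 * h^2 / 8) + Mb * (M2 * h / 2))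
      ≤ h ^ 3 / 8 * (M3 + Mb / β₀ * M2) + h ^ 4 / 64 * (Mq / β₀) * M2 := by
  have hβ₀ne : β₀ ≠ 0 := ne_of_gt hβ₀
  have d1 : h^2 / (8 * β₀) * (Mq * (M2 * h^2 / 8) + Mb * (M2 * h / 2))
      = h ^ 4 / 64 * (Mq / β₀) * M2 + h ^ 3 / 16 * (Mb / β₀ * M2) := by
    field_simp
    ring
  have d2 : h ^ 3 / 8 * (M3 + Mb / β₀ * M2)
      = h ^ 3 / 8 * M3 + h ^ 3 / 8 * (Mb / β₀ * M2) := by ring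
  have i1 : M3 * h^3 / 24 ≤ h ^ 3 / 8 * M3 := by
    nlinarith [mul_nonneg hM3 (pow_nonneg hh 3)]
  have i2 : h ^ 3 / 16 * (Mb / β₀ * M2) ≤ h ^ 3 / 8 * (Mb / β₀ * M2) := by
    have hnn : 0 ≤ Mb / β₀ * M2 := by positivity
    nlinarith [mul_nonneg (pow_nonneg hh 3) hnn]
  linarith

/-- For the Sturm–Liouville equation `β u'' + β' u' − q u + f = 0` on `[a,b]`
with `β ≥ β₀ > 0` and `u` three times continuously differentiable, the modified
(bubble-corrected) interpolant
`v x = u_I x − (β' x/(2 β x))(x−a)(x−b)(u b − u a)/(b−a)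
      + (q x/(2 β x))(x−a)(x−b) u_I x − (f x/(2 β x))(x−a)(x−b)`
(where `u_I` is the linear interpolant of `u` on `[a,b]`) satisfies
`|u x − v x| ≤ ((b−a)³/8)(sup|u'''| + (sup|β'|/β₀) sup|u''|)
             + ((b−a)⁴/64)(sup|q|/β₀) sup|u''|`. -/
theorem modified_interpolant_third_order
    (a b β₀ : ℝ) (hab : a < b) (hβ₀ : 0 < β₀)
    (β β' q f u u' u'' u''' : ℝ → ℝ)
    (hβd : ∀ x ∈ Set.Icc a b, HasDerivWithinAt β (β' x) (Set.Icc a b) x)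
    (hβ'c : ContinuousOn β' (Set.Icc a b))
    (hβlb : ∀ x ∈ Set.Icc a b, β₀ ≤ β x)
    (hq : ContinuousOn q (Set.Icc a b))
    (hf : ContinuousOn f (Set.Icc a b))
    (hu' : ∀ x ∈ Set.Icc a b, HasDerivWithinAt u (u' x) (Set.Icc a b) x)
    (hu'' : ∀ x ∈ Set.Icc a b, HasDerivWithinAt u' (u'' x) (Set.Icc a b) x)
    (hu''' : ∀ x ∈ Set.Icc a b, HasDerivWithinAt u'' (u''' x) (Set.Icc a b) x)
    (hu'''c : ContinuousOn u''' (Set.Icc a b))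
    (hode : ∀ x ∈ Set.Icc a b, β x * u'' x + β' x * u' x - q x * u x + f x = 0) :
    ∀ x ∈ Set.Icc a b,
      |u x - ((u a * (b - x) / (b - a) + u b * (x - a) / (b - a))
          - β' x / (2 * β x) * (x - a) * (x - b) * ((u b - u a) / (b - a))
          + q x / (2 * β x) * (x - a) * (x - b)
            * (u a * (b - x) / (b - a) + u b * (x - a) / (b - a))
          - f x / (2 * β x) * (x - a) * (x - b))|
        ≤ (b - a) ^ 3 / 8 * ((⨆ t : Set.Icc a b, |u''' t|)
              + (⨆ t : Set.Icc a b, |β' t|) / β₀ * (⨆ t : Set.Icc a b, |u'' t|))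
          + (b - a) ^ 4 / 64 * ((⨆ t : Set.Icc a b, |q t|) / β₀)
            * (⨆ t : Set.Icc a b, |u'' t|) := by
  intro x hx
  obtain ⟨hax, hxb⟩ := hx
  have hx : x ∈ Set.Icc a b := ⟨hax, hxb⟩
  have hba : (0:ℝ) < b - a := sub_pos.2 hab
  have hbane : (b - a) ≠ 0 := ne_of_gt hba
  have hβx : 0 < β x := lt_of_lt_of_le hβ₀ (hβlb x hx)
  have hβxne : β x ≠ 0 := ne_of_gt hβx
  have hp : 0 ≤ x - a := sub_nonneg.2 hax
  have hr : 0 ≤ b - x := sub_nonneg.2 hxb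
  have hs1 : Set.Icc a x ⊆ Set.Icc a b := Set.Icc_subset_Icc le_rfl hxb
  have hs2 : Set.Icc x b ⊆ Set.Icc a b := Set.Icc_subset_Icc hax le_rfl
  have hu''c : ContinuousOn u'' (Set.Icc a b) := fun t ht => (hu''' t ht).continuousWithinAt
  obtain ⟨hM3, hM3nn⟩ := sup_abs_bound hab.le u''' hu'''c
  obtain ⟨hM2, hM2nn⟩ := sup_abs_bound hab.le u'' hu''c
  obtain ⟨hMq, hMqnn⟩ := sup_abs_bound hab.le q hq
  obtain ⟨hMb, hMbnn⟩ := sup_abs_bound hab.le β' hβ'c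
  set M3 := ⨆ s : Set.Icc a b, |u''' s| with hM3def
  set M2 := ⨆ s : Set.Icc a b, |u'' s| with hM2def
  set Mq := ⨆ s : Set.Icc a b, |q s| with hMqdef
  set Mb := ⨆ s : Set.Icc a b, |β' s| with hMbdef
  -- Taylor estimates
  have hRb : |u b - u x - u' x * (b - x) - u'' x * ((b - x)^2 / 2)| ≤ M3 * (b - x)^3 / 6 := by
    have hF : ∀ t ∈ Set.Icc x b, HasDerivWithinAt
        (fun s => u s + (u' s * (b - s) + u'' s * ((b - s)^2 / 2)))
        (u''' t * ((b - t)^2 / 2)) (Set.Icc x b) t := by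
      intro t ht
      have hts : t ∈ Set.Icc a b := hs2 ht
      have hlin : HasDerivWithinAt (fun s => b - s) (-1) (Set.Icc x b) t := by
        simpa using (hasDerivWithinAt_id t (Set.Icc x b)).const_sub b
      have hsq := (hlin.pow 2).div_const 2
      have hcomb := ((hu' t hts).mono hs2).add
        ((((hu'' t hts).mono hs2).mul hlin).add (((hu''' t hts).mono hs2).mul hsq))
      refine hcomb.congr_deriv ?_
      push_cast [Pi.pow_apply]
      ring
    have hB : ∀ t ∈ Set.Icc x b, HasDerivWithinAt
        (fun s => -(M3 * (b - s)^3 / 6)) (M3 * ((b - t)^2 / 2)) (Set.Icc x b) t := by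
      intro t ht
      have hlin : HasDerivWithinAt (fun s => b - s) (-1) (Set.Icc x b) t := by
        simpa using (hasDerivWithinAt_id t (Set.Icc x b)).const_sub b
      have hcomb := (((hlin.pow 3).const_mul M3).div_const 6).neg
      refine hcomb.congr_deriv ?_
      push_cast
      ring
    have hbd : ∀ t ∈ Set.Icc x b, |u''' t * ((b - t)^2 / 2)| ≤ M3 * ((b - t)^2 / 2) := by
      intro t ht
      rw [abs_mul, abs_of_nonneg (by positivity : (0:ℝ) ≤ (b - t)^2 / 2)]
      exact mul_le_mul_of_nonneg_right (hM3 t (hs2 ht)) (by positivity)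
    have key : |(u b + (u' b * (b - b) + u'' b * ((b - b)^2 / 2)))
        - (u x + (u' x * (b - x) + u'' x * ((b - x)^2 / 2)))|
        ≤ -(M3 * (b - b)^3 / 6) - -(M3 * (b - x)^3 / 6) :=
      deriv_bound_aux hxb _ _ _ _ hF hB hbd
    have e1 : (u b + (u' b * (b - b) + u'' b * ((b - b)^2 / 2)))
        - (u x + (u' x * (b - x) + u'' x * ((b - x)^2 / 2)))
        = u b - u x - u' x * (b - x) - u'' x * ((b - x)^2 / 2) := by ring
    have e2 : -(M3 * (b - b)^3 / 6) - -(M3 * (b - x)^3 / 6) = M3 * (b - x)^3 / 6 := by ring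
    rw [e1, e2] at key
    exact key
  have hRa : |u a - u x - u' x * (a - x) - u'' x * ((a - x)^2 / 2)| ≤ M3 * (x - a)^3 / 6 := by
    have hF : ∀ t ∈ Set.Icc a x, HasDerivWithinAt
        (fun s => u s + (u' s * (a - s) + u'' s * ((a - s)^2 / 2)))
        (u''' t * ((a - t)^2 / 2)) (Set.Icc a x) t := by
      intro t ht
      have hts : t ∈ Set.Icc a b := hs1 ht
      have hlin : HasDerivWithinAt (fun s => a - s) (-1) (Set.Icc a x) t := by
        simpa using (hasDerivWithinAt_id t (Set.Icc a x)).const_sub a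
      have hsq := (hlin.pow 2).div_const 2
      have hcomb := ((hu' t hts).mono hs1).add
        ((((hu'' t hts).mono hs1).mul hlin).add (((hu''' t hts).mono hs1).mul hsq))
      refine hcomb.congr_deriv ?_
      push_cast [Pi.pow_apply]
      ring
    have hB : ∀ t ∈ Set.Icc a x, HasDerivWithinAt
        (fun s => M3 * (s - a)^3 / 6) (M3 * ((a - t)^2 / 2)) (Set.Icc a x) t := by
      intro t ht
      have hlin : HasDerivWithinAt (fun s => s - a) (1:ℝ) (Set.Icc a x) t := by
        simpa using (hasDerivWithinAt_id t (Set.Icc a x)).sub_const a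
      have hcomb := ((hlin.pow 3).const_mul M3).div_const 6
      refine hcomb.congr_deriv ?_
      push_cast
      ring
    have hbd : ∀ t ∈ Set.Icc a x, |u''' t * ((a - t)^2 / 2)| ≤ M3 * ((a - t)^2 / 2) := by
      intro t ht
      rw [abs_mul, abs_of_nonneg (by positivity : (0:ℝ) ≤ (a - t)^2 / 2)]
      exact mul_le_mul_of_nonneg_right (hM3 t (hs1 ht)) (by positivity)
    have key : |(u x + (u' x * (a - x) + u'' x * ((a - x)^2 / 2)))
        - (u a + (u' a * (a - a) + u'' a * ((a - a)^2 / 2)))|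
        ≤ M3 * (x - a)^3 / 6 - M3 * (a - a)^3 / 6 :=
      deriv_bound_aux hax _ _ _ _ hF hB hbd
    have e1 : (u x + (u' x * (a - x) + u'' x * ((a - x)^2 / 2)))
        - (u a + (u' a * (a - a) + u'' a * ((a - a)^2 / 2)))
        = -(u a - u x - u' x * (a - x) - u'' x * ((a - x)^2 / 2)) := by ring
    have e2 : M3 * (x - a)^3 / 6 - M3 * (a - a)^3 / 6 = M3 * (x - a)^3 / 6 := by ring
    rw [e1, e2, abs_neg] at key
    exact key
  have hSb : |u b - u x - u' x * (b - x)| ≤ M2 * (b - x)^2 / 2 := by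
    have hF : ∀ t ∈ Set.Icc x b, HasDerivWithinAt
        (fun s => u s + u' s * (b - s)) (u'' t * (b - t)) (Set.Icc x b) t := by
      intro t ht
      have hts : t ∈ Set.Icc a b := hs2 ht
      have hlin : HasDerivWithinAt (fun s => b - s) (-1) (Set.Icc x b) t := by
        simpa using (hasDerivWithinAt_id t (Set.Icc x b)).const_sub b
      have hcomb := ((hu' t hts).mono hs2).add (((hu'' t hts).mono hs2).mul hlin)
      refine hcomb.congr_deriv ?_
      ring
    have hB : ∀ t ∈ Set.Icc x b, HasDerivWithinAt
        (fun s => -(M2 * (b - s)^2 / 2)) (M2 * (b - t)) (Set.Icc x b) t := by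
      intro t ht
      have hlin : HasDerivWithinAt (fun s => b - s) (-1) (Set.Icc x b) t := by
        simpa using (hasDerivWithinAt_id t (Set.Icc x b)).const_sub b
      have hcomb := (((hlin.pow 2).const_mul M2).div_const 2).neg
      refine hcomb.congr_deriv ?_
      push_cast
      ring
    have hbd : ∀ t ∈ Set.Icc x b, |u'' t * (b - t)| ≤ M2 * (b - t) := by
      intro t ht
      rw [abs_mul, abs_of_nonneg (sub_nonneg.2 ht.2)]
      exact mul_le_mul_of_nonneg_right (hM2 t (hs2 ht)) (sub_nonneg.2 ht.2)
    have key : |(u b + u' b * (b - b)) - (u x + u' x * (b - x))|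
        ≤ -(M2 * (b - b)^2 / 2) - -(M2 * (b - x)^2 / 2) :=
      deriv_bound_aux hxb _ _ _ _ hF hB hbd
    have e1 : (u b + u' b * (b - b)) - (u x + u' x * (b - x))
        = u b - u x - u' x * (b - x) := by ring
    have e2 : -(M2 * (b - b)^2 / 2) - -(M2 * (b - x)^2 / 2) = M2 * (b - x)^2 / 2 := by ring
    rw [e1, e2] at key
    exact key
  have hSa : |u a - u x - u' x * (a - x)| ≤ M2 * (x - a)^2 / 2 := by
    have hF : ∀ t ∈ Set.Icc a x, HasDerivWithinAt
        (fun s => u s + u' s * (a - s)) (u'' t * (a - t)) (Set.Icc a x) t := by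
      intro t ht
      have hts : t ∈ Set.Icc a b := hs1 ht
      have hlin : HasDerivWithinAt (fun s => a - s) (-1) (Set.Icc a x) t := by
        simpa using (hasDerivWithinAt_id t (Set.Icc a x)).const_sub a
      have hcomb := ((hu' t hts).mono hs1).add (((hu'' t hts).mono hs1).mul hlin)
      refine hcomb.congr_deriv ?_
      ring
    have hB : ∀ t ∈ Set.Icc a x, HasDerivWithinAt
        (fun s => M2 * (s - a)^2 / 2) (M2 * (t - a)) (Set.Icc a x) t := by
      intro t ht
      have hlin : HasDerivWithinAt (fun s => s - a) (1:ℝ) (Set.Icc a x) t := by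
        simpa using (hasDerivWithinAt_id t (Set.Icc a x)).sub_const a
      have hcomb := ((hlin.pow 2).const_mul M2).div_const 2
      refine hcomb.congr_deriv ?_
      push_cast
      ring
    have hbd : ∀ t ∈ Set.Icc a x, |u'' t * (a - t)| ≤ M2 * (t - a) := by
      intro t ht
      rw [abs_mul, abs_sub_comm, abs_of_nonneg (sub_nonneg.2 ht.1)]
      exact mul_le_mul_of_nonneg_right (hM2 t (hs1 ht)) (sub_nonneg.2 ht.1)
    have key : |(u x + u' x * (a - x)) - (u a + u' a * (a - a))|
        ≤ M2 * (x - a)^2 / 2 - M2 * (a - a)^2 / 2 :=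
      deriv_bound_aux hax _ _ _ _ hF hB hbd
    have e1 : (u x + u' x * (a - x)) - (u a + u' a * (a - a))
        = -(u a - u x - u' x * (a - x)) := by ring
    have e2 : M2 * (x - a)^2 / 2 - M2 * (a - a)^2 / 2 = M2 * (x - a)^2 / 2 := by ring
    rw [e1, e2, abs_neg] at key
    exact key
  -- abbreviations
  set Ra := u a - u x - u' x * (a - x) - u'' x * ((a - x)^2 / 2) with hRadef
  set Rb := u b - u x - u' x * (b - x) - u'' x * ((b - x)^2 / 2) with hRbdef
  set Sa := u a - u x - u' x * (a - x) with hSadef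
  set Sb := u b - u x - u' x * (b - x) with hSbdef
  set uI := u a * (b - x) / (b - a) + u b * (x - a) / (b - a) with huIdef
  set e := u x - uI with hedef
  set e' := u' x - (u b - u a) / (b - a) with he'def
  -- key identities
  have ide : e = -(((b - x) * Sa + (x - a) * Sb) / (b - a)) := by
    rw [hedef, huIdef, hSadef, hSbdef]
    field_simp
    ring
  have idE : e - (x - a) * (x - b) / 2 * u'' x
      = -(((b - x) * Ra + (x - a) * Rb) / (b - a)) := by
    rw [hedef, huIdef, hRadef, hRbdef]
    field_simp
    ring
  have ide' : e' = -((Sb - Sa) / (b - a)) := by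
    rw [he'def, hSadef, hSbdef]
    field_simp
    ring
  have hfx : f x = q x * u x - β x * u'' x - β' x * u' x := by linarith [hode x hx]
  have main : u x - (uI
          - β' x / (2 * β x) * (x - a) * (x - b) * ((u b - u a) / (b - a))
          + q x / (2 * β x) * (x - a) * (x - b) * uI
          - f x / (2 * β x) * (x - a) * (x - b))
      = (e - (x - a) * (x - b) / 2 * u'' x)
        + (x - a) * (x - b) / (2 * β x) * (q x * e - β' x * e') := by
    rw [hedef, he'def, huIdef, hfx]
    field_simp
    ring
  -- bounds
  have he : |e| ≤ M2 * (b - a)^2 / 8 := by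
    rw [ide, abs_neg, abs_div, abs_of_pos hba]
    refine bound_quad (x - a) (b - x) (b - a) M2 _ hM2nn hp hr (by ring) hba ?_
    refine le_trans (abs_add_le _ _) ?_
    rw [abs_mul, abs_mul, abs_of_nonneg hr, abs_of_nonneg hp]
    exact add_le_add (mul_le_mul_of_nonneg_left hSa hr) (mul_le_mul_of_nonneg_left hSb hp)
  have hE : |e - (x - a) * (x - b) / 2 * u'' x| ≤ M3 * (b - a)^3 / 24 := by
    rw [idE, abs_neg, abs_div, abs_of_pos hba]
    refine bound_cubic (x - a) (b - x) (b - a) M3 _ hM3nn hp hr (by ring) hba ?_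
    refine le_trans (abs_add_le _ _) ?_
    rw [abs_mul, abs_mul, abs_of_nonneg hr, abs_of_nonneg hp]
    exact add_le_add (mul_le_mul_of_nonneg_left hRa hr) (mul_le_mul_of_nonneg_left hRb hp)
  have he' : |e'| ≤ M2 * (b - a) / 2 := by
    rw [ide', abs_neg, abs_div, abs_of_pos hba]
    refine bound_lin (x - a) (b - x) (b - a) M2 _ hM2nn hp hr (by ring) hba ?_
    exact le_trans (abs_sub _ _) (add_le_add hSb hSa)
  have hT : |(x - a) * (x - b) / (2 * β x) * (q x * e - β' x * e')|
      ≤ (b - a)^2 / (8 * β₀) * (Mq * (M2 * (b - a)^2 / 8) + Mb * (M2 * (b - a) / 2)) := by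
    rw [abs_mul]
    have h1 : |(x - a) * (x - b) / (2 * β x)| ≤ (b - a)^2 / (8 * β₀) := by
      rw [abs_div, abs_mul, abs_of_nonneg hp, abs_sub_comm x b, abs_of_nonneg hr,
        abs_of_pos (by positivity : (0:ℝ) < 2 * β x)]
      have hnum : (x - a) * (b - x) ≤ (b - a)^2 / 4 := bound_quarter _ _ _ (by ring)
      have hden : 2 * β₀ ≤ 2 * β x := by linarith [hβlb x hx]
      have hstep : (x - a) * (b - x) / (2 * β x) ≤ ((b - a)^2 / 4) / (2 * β₀) :=
        div_le_div₀ (by positivity) hnum (by positivity) hden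
      have heq : ((b - a)^2 / 4) / (2 * β₀) = (b - a)^2 / (8 * β₀) := by ring
      rw [heq] at hstep
      exact hstep
    have h2 : |q x * e - β' x * e'| ≤ Mq * (M2 * (b - a)^2 / 8) + Mb * (M2 * (b - a) / 2) := by
      refine le_trans (abs_sub _ _) ?_
      rw [abs_mul, abs_mul]
      exact add_le_add (mul_le_mul (hMq x hx) he (abs_nonneg _) hMqnn)
        (mul_le_mul (hMb x hx) he' (abs_nonneg _) hMbnn)
    exact mul_le_mul h1 h2 (abs_nonneg _) (by positivity)
  -- combine
  rw [main]
  refine le_trans (abs_add_le _ _) (le_trans (add_le_add hE hT) ?_)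
  exact bound_final (b - a) β₀ M3 M2 Mq Mb hba.le hβ₀ hM3nn hM2nn hMqnn hMbnn
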